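/- arXiv:1310.5244 — 2 statements merged into one kernel-verified Lean document; each statement's English description precedes it below -/
import Mathlib

section
/- Let P be a finite set of points and H a finite collection of sets in R^n. Fix γ > 4 and assume that for each pair of distinct sets H, H' ∈ H, the number of H'' ∈ H with |H ∩ H' ∩ H'' ∩ P| ≥ γ is at most γ. Then I(P,H) ≤ 4γ(|P| + |H|·|P|^{2/3}). -/
open scoped Classical

set_option maxHeartbeats 1000000

private lemma natarith (g D : ℕ) (hD : 2*g+6 ≤ D) :
    D^3 + 4*(D*((D-1)*g)) ≤ 4*(D*((D-1)*(D-2))) := by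
  obtain ⟨a, ha, rfl⟩ : ∃ a, g + 4 ≤ a ∧ D = a + g + 2 := ⟨D - (g+2), by omega, by omega⟩
  have h1 : a + g + 2 - 1 = a + g + 1 := by omega
  have h2 : a + g + 2 - 2 = a + g := by omega
  rw [h1, h2]
  nlinarith [sq_nonneg (a+g), sq_nonneg a, Nat.zero_le g]

private lemma sum_boole_ite {β : Type*} (s : Finset β) (A : Prop) [Decidable A] (f : β → ℕ) :
    ∑ x ∈ s, (if A then f x else 0) = if A then ∑ x ∈ s, f x else 0 := by
  split <;> simp

private lemma boole_triple_le {A B C D : Prop} [Decidable A] [Decidable B] [Decidable C]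
    [Decidable D] (h : A → B → C → D) :
    (if A then 1 else 0) * ((if B then 1 else 0) * (if C then 1 else 0)) ≤
      (if D then (1:ℕ) else 0) := by
  by_cases hA : A <;> by_cases hB : B <;> by_cases hC : C <;> simp_all

/-- the number of points of `P` in the triple intersection -/
private noncomputable def cnt {n : ℕ} (P : Finset (Fin n → ℝ))
    (h h' h'' : Set (Fin n → ℝ)) : ℕ :=
  (P.filter (fun p => p ∈ h ∧ p ∈ h' ∧ p ∈ h'')).card

/-- the link of a point: sets of `H` containing it -/
private noncomputable def lnk {n : ℕ} (H : Finset (Set (Fin n → ℝ)))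
    (p : Fin n → ℝ) : Finset (Set (Fin n → ℝ)) :=
  H.filter (fun h => p ∈ h)

/-- number of ordered distinct "non-heavy" triples of sets through `p` -/
private noncomputable def Yf {n : ℕ} (γ : ℝ) (P : Finset (Fin n → ℝ))
    (H : Finset (Set (Fin n → ℝ))) (p : Fin n → ℝ) : ℕ :=
  ∑ h ∈ H, ∑ h' ∈ H, ∑ h'' ∈ H,
    (if p ∈ h then 1 else 0) * ((if p ∈ h' ∧ h' ≠ h then 1 else 0) *
      (if (p ∈ h'' ∧ h'' ≠ h ∧ h'' ≠ h') ∧ (cnt P h h' h'' : ℝ) < γ then 1 else 0))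

private lemma Yf_eq {n : ℕ} (γ : ℝ) (P : Finset (Fin n → ℝ))
    (H : Finset (Set (Fin n → ℝ))) (p : Fin n → ℝ) :
    Yf γ P H p = ∑ h ∈ lnk H p, ∑ h' ∈ (lnk H p).erase h,
      (H.filter (fun h'' => (p ∈ h'' ∧ h'' ≠ h ∧ h'' ≠ h') ∧ (cnt P h h' h'' : ℝ) < γ)).card := by
  have e1 : ∀ h : Set (Fin n → ℝ), H.filter (fun h' => p ∈ h' ∧ h' ≠ h) = (lnk H p).erase h := by
    intro h
    unfold lnk
    rw [← Finset.filter_ne' (H.filter fun h' => p ∈ h') h, Finset.filter_filter]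
  unfold Yf
  simp only [boole_mul]
  calc ∑ h ∈ H, ∑ h' ∈ H, ∑ h'' ∈ H,
        (if p ∈ h then (if p ∈ h' ∧ h' ≠ h then
          (if (p ∈ h'' ∧ h'' ≠ h ∧ h'' ≠ h') ∧ (cnt P h h' h'' : ℝ) < γ then 1 else 0)
          else 0) else 0)
      = ∑ h ∈ H, (if p ∈ h then (∑ h' ∈ H, (if p ∈ h' ∧ h' ≠ h then
          ((H.filter (fun h'' =>
            (p ∈ h'' ∧ h'' ≠ h ∧ h'' ≠ h') ∧ (cnt P h h' h'' : ℝ) < γ)).card)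
          else 0)) else 0) := by
        refine Finset.sum_congr rfl fun h _ => ?_
        rw [← sum_boole_ite]
        refine Finset.sum_congr rfl fun h' _ => ?_
        rw [sum_boole_ite, sum_boole_ite, ← Finset.card_filter]
    _ = _ := by
        rw [← Finset.sum_filter]
        refine Finset.sum_congr rfl fun h _ => ?_
        rw [← Finset.sum_filter, e1 h]

/-- Lemma 2.2: if for each pair of distinct sets `h ≠ h'` in `H` there are at most `γ`
sets `h''` in `H` with `|h ∩ h' ∩ h'' ∩ P| ≥ γ`, then
`I(P,H) ≤ 4γ(|P| + |H|·|P|^{2/3})`. -/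
theorem stmt_1 (n : ℕ) (γ : ℝ) (hγ : 4 < γ)
    (P : Finset (Fin n → ℝ)) (H : Finset (Set (Fin n → ℝ)))
    (hint : ∀ h ∈ H, ∀ h' ∈ H, h ≠ h' →
      ((H.filter (fun h'' => γ ≤
        ((P.filter (fun p => p ∈ h ∧ p ∈ h' ∧ p ∈ h'')).card : ℝ))).card : ℝ) ≤ γ) :
    ((∑ h ∈ H, (P.filter (fun p => p ∈ h)).card : ℕ) : ℝ) ≤
      4 * γ * (P.card + H.card * (P.card : ℝ) ^ ((2 : ℝ) / 3)) := by
  have hγ0 : (0:ℝ) ≤ γ := by linarith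
  set g : ℕ := ⌊γ⌋₊ with hgdef
  have hgγ : (g:ℝ) ≤ γ := Nat.floor_le hγ0
  have hγg1 : γ < (g:ℝ) + 1 := Nat.lt_floor_add_one γ
  have hg4 : 4 ≤ g := Nat.le_floor (by push_cast; linarith)
  set D : (Fin n → ℝ) → ℕ := fun p => (lnk H p).card with hDdef
  -- incidence swap
  have hswap : ∑ h ∈ H, (P.filter (fun p => p ∈ h)).card = ∑ p ∈ P, D p := by
    simp only [hDdef, lnk, Finset.card_filter]
    exact Finset.sum_comm
  -- per-pair bound
  have pair_bound : ∀ p ∈ P, ∀ h ∈ lnk H p, ∀ h' ∈ (lnk H p).erase h,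
      D p - 2 ≤ g + (H.filter (fun h'' =>
        (p ∈ h'' ∧ h'' ≠ h ∧ h'' ≠ h') ∧ (cnt P h h' h'' : ℝ) < γ)).card := by
    intro p hp h hh h' hh'
    obtain ⟨hne', hh'L⟩ := Finset.mem_erase.mp hh'
    have hhH : h ∈ H := (Finset.mem_filter.mp hh).1
    have hh'H : h' ∈ H := (Finset.mem_filter.mp hh'L).1
    set E := H.filter (fun h'' => p ∈ h'' ∧ h'' ≠ h ∧ h'' ≠ h') with hE
    have hEeq : E = ((lnk H p).erase h).erase h' := by
      ext x
      simp only [hE, lnk, Finset.mem_erase, Finset.mem_filter]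
      tauto
    have hEcard : E.card = D p - 2 := by
      rw [hEeq, Finset.card_erase_of_mem hh', Finset.card_erase_of_mem hh]
      simp only [hDdef]
      omega
    have hsplit := Finset.card_filter_add_card_filter_not
      (s := E) (p := fun h'' => γ ≤ (cnt P h h' h'' : ℝ))
    have h1 : (E.filter (fun h'' => γ ≤ (cnt P h h' h'' : ℝ))).card ≤ g := by
      have hsub : E.filter (fun h'' => γ ≤ (cnt P h h' h'' : ℝ)) ⊆
          H.filter (fun h'' => γ ≤
            ((P.filter (fun p => p ∈ h ∧ p ∈ h' ∧ p ∈ h'')).card : ℝ)) := by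
        intro x hx
        simp only [hE, cnt, Finset.mem_filter] at hx ⊢
        tauto
      refine Nat.le_floor ?_
      calc ((E.filter (fun h'' => γ ≤ (cnt P h h' h'' : ℝ))).card : ℝ)
          ≤ _ := Nat.cast_le.mpr (Finset.card_le_card hsub)
        _ ≤ γ := hint h hhH h' hh'H (by exact fun hcon => hne' (by rw [hcon]))
    have h2 : E.filter (fun h'' => ¬ γ ≤ (cnt P h h' h'' : ℝ)) =
        H.filter (fun h'' => (p ∈ h'' ∧ h'' ≠ h ∧ h'' ≠ h') ∧ (cnt P h h' h'' : ℝ) < γ) := by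
      rw [hE, Finset.filter_filter]
      refine Finset.filter_congr fun x _ => ?_
      rw [not_le]
    rw [h2] at hsplit
    omega
  -- per-point counting inequality
  have key1 : ∀ p ∈ P, D p * ((D p - 1) * (D p - 2)) ≤ D p * ((D p - 1) * g) + Yf γ P H p := by
    intro p hp
    rw [Yf_eq]
    have hcard1 : ∀ h ∈ lnk H p, ((lnk H p).erase h).card = D p - 1 := by
      intro h hh
      rw [Finset.card_erase_of_mem hh]
    calc D p * ((D p - 1) * (D p - 2))
        = ∑ h ∈ lnk H p, ∑ h' ∈ (lnk H p).erase h, (D p - 2) := by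
          rw [Finset.sum_congr rfl fun h hh => (by
            rw [Finset.sum_const, hcard1 h hh, smul_eq_mul] :
              ∑ h' ∈ (lnk H p).erase h, (D p - 2) = (D p - 1) * (D p - 2))]
          rw [Finset.sum_const, smul_eq_mul]
      _ ≤ ∑ h ∈ lnk H p, ∑ h' ∈ (lnk H p).erase h, (g + (H.filter (fun h'' =>
            (p ∈ h'' ∧ h'' ≠ h ∧ h'' ≠ h') ∧ (cnt P h h' h'' : ℝ) < γ)).card) := by
          refine Finset.sum_le_sum fun h hh => Finset.sum_le_sum fun h' hh' => ?_
          exact pair_bound p hp h hh h' hh'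
      _ = D p * ((D p - 1) * g) + _ := by
          rw [Finset.sum_congr rfl fun h hh => Finset.sum_add_distrib,
            Finset.sum_add_distrib]
          congr 1
          rw [Finset.sum_congr rfl fun h hh => (by
            rw [Finset.sum_const, hcard1 h hh, smul_eq_mul] :
              ∑ _h' ∈ (lnk H p).erase h, g = (D p - 1) * g)]
          rw [Finset.sum_const, smul_eq_mul]
  -- global bound on the non-heavy count
  have hYsum : ∑ p ∈ P, Yf γ P H p ≤ H.card * (H.card * (H.card * g)) := by
    have hsw : ∑ p ∈ P, Yf γ P H p = ∑ h ∈ H, ∑ h' ∈ H, ∑ h'' ∈ H, ∑ p ∈ P,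
        (if p ∈ h then 1 else 0) * ((if p ∈ h' ∧ h' ≠ h then 1 else 0) *
          (if (p ∈ h'' ∧ h'' ≠ h ∧ h'' ≠ h') ∧ (cnt P h h' h'' : ℝ) < γ then 1 else 0)) := by
      unfold Yf
      rw [Finset.sum_comm]
      refine Finset.sum_congr rfl fun h _ => ?_
      rw [Finset.sum_comm]
      refine Finset.sum_congr rfl fun h' _ => Finset.sum_comm
    rw [hsw]
    have inner : ∀ h h' h'', h ∈ H → h' ∈ H → h'' ∈ H → ∑ p ∈ P,
        (if p ∈ h then 1 else 0) * ((if p ∈ h' ∧ h' ≠ h then 1 else 0) *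
          (if (p ∈ h'' ∧ h'' ≠ h ∧ h'' ≠ h') ∧ (cnt P h h' h'' : ℝ) < γ then 1 else 0)) ≤ g := by
      intro h h' h'' _ _ _
      by_cases hc : (cnt P h h' h'' : ℝ) < γ
      · have hcg : cnt P h h' h'' ≤ g := by
          by_contra hcon
          push_neg at hcon
          have : (g:ℝ) + 1 ≤ (cnt P h h' h'' : ℝ) := by exact_mod_cast hcon
          linarith
        calc ∑ p ∈ P, (if p ∈ h then 1 else 0) * ((if p ∈ h' ∧ h' ≠ h then 1 else 0) *
              (if (p ∈ h'' ∧ h'' ≠ h ∧ h'' ≠ h') ∧ (cnt P h h' h'' : ℝ) < γ then 1 else 0))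
            ≤ ∑ p ∈ P, (if p ∈ h ∧ p ∈ h' ∧ p ∈ h'' then 1 else 0) := by
              refine Finset.sum_le_sum fun p _ => boole_triple_le fun h1 h2 h3 =>
                ⟨h1, h2.1, h3.1.1⟩
          _ = cnt P h h' h'' := by rw [cnt, Finset.card_filter]
          _ ≤ g := hcg
      · refine le_of_eq_of_le (Finset.sum_eq_zero fun p _ => ?_) (Nat.zero_le _)
        simp [hc]
    refine le_trans (Finset.sum_le_sum fun h hh => Finset.sum_le_sum fun h' hh' =>
      Finset.sum_le_sum fun h'' hh'' => inner h h' h'' hh hh' hh'') ?_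
    simp [Finset.sum_const, smul_eq_mul, mul_assoc]
  -- heavy points
  set S := P.filter (fun p => 2*g+6 ≤ D p) with hS
  have cube_p : ∀ p ∈ S, (D p)^3 ≤ 4 * Yf γ P H p := by
    intro p hp
    obtain ⟨hpP, hpD⟩ := Finset.mem_filter.mp hp
    have h1 := key1 p hpP
    have h2 := natarith g (D p) hpD
    have h3 : 4 * (D p * ((D p - 1) * (D p - 2))) ≤
        4 * (D p * ((D p - 1) * g)) + 4 * Yf γ P H p := by
      calc 4 * (D p * ((D p - 1) * (D p - 2)))
          ≤ 4 * (D p * ((D p - 1) * g) + Yf γ P H p) := Nat.mul_le_mul_left 4 h1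
        _ = _ := Nat.mul_add 4 _ _
    have h4 : (D p)^3 + 4 * (D p * ((D p - 1) * g)) ≤
        4 * (D p * ((D p - 1) * g)) + 4 * Yf γ P H p := le_trans h2 h3
    rw [Nat.add_comm ((D p)^3)] at h4
    exact Nat.le_of_add_le_add_left h4
  have hheavy3 : ∑ p ∈ S, (D p)^3 ≤ 4 * (H.card * (H.card * (H.card * g))) := by
    calc ∑ p ∈ S, (D p)^3 ≤ ∑ p ∈ S, 4 * Yf γ P H p := Finset.sum_le_sum cube_p
      _ = 4 * ∑ p ∈ S, Yf γ P H p := (Finset.mul_sum _ _ _).symm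
      _ ≤ 4 * ∑ p ∈ P, Yf γ P H p :=
          Nat.mul_le_mul_left 4 (Finset.sum_le_sum_of_subset (Finset.filter_subset _ _))
      _ ≤ _ := Nat.mul_le_mul_left 4 hYsum
  -- light points
  have hlight : ∑ p ∈ P.filter (fun p => ¬ 2*g+6 ≤ D p), D p ≤ (2*g+5) * P.card := by
    calc ∑ p ∈ P.filter (fun p => ¬ 2*g+6 ≤ D p), D p
        ≤ (P.filter (fun p => ¬ 2*g+6 ≤ D p)).card • (2*g+5) := by
          refine Finset.sum_le_card_nsmul _ _ _ fun p hp => ?_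
          have := (Finset.mem_filter.mp hp).2
          omega
      _ ≤ P.card * (2*g+5) := by
          rw [smul_eq_mul]
          exact Nat.mul_le_mul_right _ (Finset.card_filter_le _ _)
      _ = (2*g+5) * P.card := Nat.mul_comm _ _
  -- pass to the reals
  have htotal : ∑ p ∈ P, D p = (∑ p ∈ S, D p) +
      ∑ p ∈ P.filter (fun p => ¬ 2*g+6 ≤ D p), D p :=
    (Finset.sum_filter_add_sum_filter_not P _ D).symm
  set m := P.card with hm
  set N := H.card with hN
  set X := ∑ p ∈ S, D p with hX
  have hXcube : ((X:ℝ))^3 ≤ (m:ℝ)^2 * (4 * γ * (N:ℝ)^3) := by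
    have hjensen := pow_sum_div_card_le_sum_pow (s := S) (f := fun p => (D p : ℝ))
      (fun i _ => Nat.cast_nonneg _) 2
    have hcastX : ∑ p ∈ S, ((D p : ℝ)) = (X:ℝ) := (Nat.cast_sum _ _).symm
    have hcast3 : ∑ p ∈ S, ((D p : ℝ))^3 ≤ 4 * γ * (N:ℝ)^3 := by
      have hc : ((∑ p ∈ S, (D p)^3 : ℕ) : ℝ) ≤ ((4 * (N * (N * (N * g))) : ℕ) : ℝ) :=
        Nat.cast_le.mpr hheavy3
      push_cast at hc
      calc ∑ p ∈ S, ((D p : ℝ))^3 = ((∑ p ∈ S, (D p)^3 : ℕ) : ℝ) := by push_cast; ring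
        _ ≤ 4 * ((N:ℝ) * ((N:ℝ) * ((N:ℝ) * (g:ℝ)))) := by push_cast; exact hc
        _ = 4 * (N:ℝ)^3 * (g:ℝ) := by ring
        _ ≤ 4 * (N:ℝ)^3 * γ := by
            refine mul_le_mul_of_nonneg_left hgγ ?_
            positivity
        _ = 4 * γ * (N:ℝ)^3 := by ring
    have hScard : ((S.card : ℝ))^2 ≤ (m:ℝ)^2 := by
      have h0 : ((S.card:ℝ)) ≤ (m:ℝ) := Nat.cast_le.mpr (Finset.card_filter_le _ _)
      nlinarith [Nat.cast_nonneg (α := ℝ) S.card]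
    rcases Nat.eq_zero_or_pos S.card with hzero | hpos
    · have hSe : S = ∅ := Finset.card_eq_zero.mp hzero
      rw [hX, hSe]
      simp only [Finset.sum_empty, Nat.cast_zero]
      have hpos : (0:ℝ) ≤ (m:ℝ)^2 * (4 * γ * (N:ℝ)^3) := by positivity
      calc ((0:ℝ))^3 = 0 := by ring
        _ ≤ _ := hpos
    · have hSpos : (0:ℝ) < ((S.card:ℝ))^2 := by
        have : (0:ℝ) < (S.card:ℝ) := by exact_mod_cast hpos
        positivity
      rw [div_le_iff₀ hSpos] at hjensen
      calc ((X:ℝ))^3 = (∑ p ∈ S, ((D p : ℝ)))^(2+1) := by rw [hcastX]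
        _ ≤ (∑ p ∈ S, ((D p : ℝ))^(2+1)) * ((S.card:ℝ))^2 := hjensen
        _ ≤ (4 * γ * (N:ℝ)^3) * (m:ℝ)^2 := by
            refine mul_le_mul hcast3 hScard (by positivity) ?_
            positivity
        _ = (m:ℝ)^2 * (4 * γ * (N:ℝ)^3) := by ring
  have hw3 : (((m:ℝ)) ^ ((2:ℝ)/3))^(3:ℕ) = (m:ℝ)^2 := by
    have he : ((2:ℝ)/3) * ((3:ℕ):ℝ) = ((2:ℕ):ℝ) := by norm_num
    rw [← Real.rpow_natCast ((m:ℝ) ^ ((2:ℝ)/3)) 3, ← Real.rpow_mul (Nat.cast_nonneg m), he,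
      Real.rpow_natCast]
  have hXle : (X:ℝ) ≤ 4 * γ * (N:ℝ) * ((m:ℝ)) ^ ((2:ℝ)/3) := by
    have h0 : (0:ℝ) ≤ 4 * γ * (N:ℝ) * ((m:ℝ)) ^ ((2:ℝ)/3) := by positivity
    refine (pow_le_pow_iff_left₀ (Nat.cast_nonneg X) h0 (by norm_num : (3:ℕ) ≠ 0)).mp ?_
    calc ((X:ℝ))^3 ≤ (m:ℝ)^2 * (4 * γ * (N:ℝ)^3) := hXcube
      _ ≤ (m:ℝ)^2 * (64 * γ^3 * (N:ℝ)^3) := by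
          refine mul_le_mul_of_nonneg_left ?_ (by positivity)
          refine mul_le_mul_of_nonneg_right ?_ (by positivity)
          have hγpos : (0:ℝ) < γ := by linarith
          have ha2 : (16:ℝ) ≤ γ^2 := by nlinarith
          have ha3 : 16*γ ≤ γ^3 := by nlinarith [mul_le_mul_of_nonneg_left ha2 hγpos.le]
          linarith
      _ = (4 * γ * (N:ℝ) * ((m:ℝ)) ^ ((2:ℝ)/3))^3 := by
          rw [mul_pow, mul_pow, mul_pow, hw3]
          ring
  rw [hswap, htotal, Nat.cast_add]
  have hlightR : ((∑ p ∈ P.filter (fun p => ¬ 2*g+6 ≤ D p), D p : ℕ) : ℝ) ≤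
      4 * γ * (m:ℝ) := by
    calc ((∑ p ∈ P.filter (fun p => ¬ 2*g+6 ≤ D p), D p : ℕ) : ℝ)
        ≤ (((2*g+5) * m : ℕ) : ℝ) := Nat.cast_le.mpr hlight
      _ = ((2*(g:ℝ)+5)) * (m:ℝ) := by push_cast; ring
      _ ≤ 4 * γ * (m:ℝ) := by
          refine mul_le_mul_of_nonneg_right (by linarith) (Nat.cast_nonneg m)
  calc (X:ℝ) + ((∑ p ∈ P.filter (fun p => ¬ 2*g+6 ≤ D p), D p : ℕ) : ℝ)
      ≤ 4 * γ * (N:ℝ) * ((m:ℝ)) ^ ((2:ℝ)/3) + 4 * γ * (m:ℝ) := add_le_add hXle hlightR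
    _ = 4 * γ * ((m:ℝ) + (N:ℝ) * ((m:ℝ)) ^ ((2:ℝ)/3)) := by ring
end

section
/- Let E be a finite bipartite graph with vertex sets P and H and edge count E. If every pair of distinct vertices in H has at most γ common neighbors in P (with γ > 4), then either E ≤ 2|P| or E² ≤ 2γ|P||H|². -/
open scoped Classical

/-- Double-counting core: in a finite bipartite graph with parts `P` and `H` in which
any two distinct vertices of `H` have at most `γ` common neighbors in `P` (γ > 4),
the edge count `E` satisfies `E ≤ 2|P|` or `E² ≤ 2γ|P||H|²`. -/
theorem stmt_2 {α β : Type*} (P : Finset α) (H : Finset β) (Adj : α → β → Prop)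
    (γ : ℝ) (hγ : 4 < γ)
    (hcommon : ∀ h ∈ H, ∀ h' ∈ H, h ≠ h' →
      ((P.filter (fun p => Adj p h ∧ Adj p h')).card : ℝ) ≤ γ) :
    (((P ×ˢ H).filter (fun q => Adj q.1 q.2)).card : ℝ) ≤ 2 * P.card ∨
      (((P ×ˢ H).filter (fun q => Adj q.1 q.2)).card : ℝ) ^ 2 ≤
        2 * γ * P.card * (H.card : ℝ) ^ 2 := by
  classical
  set i : α → β → ℝ := fun p h => if Adj p h then 1 else 0 with hi
  have hE : (((P ×ˢ H).filter (fun q => Adj q.1 q.2)).card : ℝ)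
      = ∑ p ∈ P, ∑ h ∈ H, i p h := by
    rw [Finset.card_filter]
    push_cast
    rw [Finset.sum_product]
  set E : ℝ := ∑ p ∈ P, ∑ h ∈ H, i p h with hEdef
  have hEnonneg : 0 ≤ E := by
    rw [← hE]; positivity
  have tcard : ∀ h h', ∑ p ∈ P, i p h * i p h'
      = ((P.filter (fun p => Adj p h ∧ Adj p h')).card : ℝ) := by
    intro h h'
    rw [Finset.card_filter]
    push_cast
    refine Finset.sum_congr rfl fun p _ => ?_
    by_cases ha : Adj p h <;> by_cases hb : Adj p h' <;> simp [hi, ha, hb]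
  have hdiag : ∑ h ∈ H, ∑ p ∈ P, i p h * i p h = E := by
    rw [hEdef, Finset.sum_comm]
    refine Finset.sum_congr rfl fun a _ => Finset.sum_congr rfl fun b _ => ?_
    by_cases ha : Adj a b <;> simp [hi, ha]
  have key : ∑ p ∈ P, (∑ h ∈ H, i p h) ^ 2 ≤ γ * (H.card : ℝ) ^ 2 + E := by
    have expand : ∑ p ∈ P, (∑ h ∈ H, i p h) ^ 2
        = ∑ h ∈ H, ∑ h' ∈ H, ∑ p ∈ P, i p h * i p h' := by
      have : ∀ p ∈ P, (∑ h ∈ H, i p h) ^ 2 = ∑ h ∈ H, ∑ h' ∈ H, i p h * i p h' := by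
        intro p _
        rw [sq, Finset.sum_mul_sum]
      rw [Finset.sum_congr rfl this, Finset.sum_comm]
      exact Finset.sum_congr rfl fun h _ => Finset.sum_comm
    rw [expand]
    have step : ∀ h ∈ H, ∑ h' ∈ H, ∑ p ∈ P, i p h * i p h'
        ≤ (∑ p ∈ P, i p h * i p h) + γ * (H.card : ℝ) := by
      intro h hh
      rw [← Finset.add_sum_erase _ _ hh]
      gcongr
      calc ∑ h' ∈ H.erase h, ∑ p ∈ P, i p h * i p h'
          ≤ ∑ h' ∈ H.erase h, γ := by
            refine Finset.sum_le_sum fun h' hh' => ?_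
            rw [tcard]
            exact hcommon h hh h' (Finset.mem_of_mem_erase hh')
              (Ne.symm (Finset.ne_of_mem_erase hh'))
        _ ≤ (H.card : ℝ) * γ := by
            rw [Finset.sum_const, nsmul_eq_mul]
            have : ((H.erase h).card : ℝ) ≤ (H.card : ℝ) := by
              exact_mod_cast Finset.card_le_card (Finset.erase_subset _ _)
            nlinarith
        _ = γ * (H.card : ℝ) := mul_comm _ _
    calc ∑ h ∈ H, ∑ h' ∈ H, ∑ p ∈ P, i p h * i p h'
        ≤ ∑ h ∈ H, ((∑ p ∈ P, i p h * i p h) + γ * (H.card : ℝ)) :=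
          Finset.sum_le_sum step
      _ = E + (H.card : ℝ) * (γ * (H.card : ℝ)) := by
          rw [Finset.sum_add_distrib, hdiag, Finset.sum_const, nsmul_eq_mul]
      _ ≤ γ * (H.card : ℝ) ^ 2 + E := by ring_nf; nlinarith [sq_nonneg (H.card : ℝ)]
  have cs : E ^ 2 ≤ (P.card : ℝ) * ∑ p ∈ P, (∑ h ∈ H, i p h) ^ 2 := by
    have := sq_sum_le_card_mul_sum_sq (s := P) (f := fun p => ∑ h ∈ H, i p h)
    exact_mod_cast this
  by_cases hle : E ≤ 2 * (P.card : ℝ)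
  · left; rw [hE]; exact hle
  · right
    rw [hE]
    push_neg at hle
    have hPnonneg : (0 : ℝ) ≤ (P.card : ℝ) := Nat.cast_nonneg _
    have h1 : E ^ 2 ≤ (P.card : ℝ) * (γ * (H.card : ℝ) ^ 2 + E) :=
      le_trans cs (by nlinarith)
    nlinarith [sq_nonneg E]
end
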